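/- Loss of expressivity for the two-qubit model initialized at |00⟩. With the model of the previous setting (initial state |0⟩⊗|0⟩, observable σz⊗σz, Hamiltonian x·σz⊗σz + θ₁(t)·σx⊗I₂ + θ₂(t)·I₂⊗σx with piecewise-constant controls), for every K ∈ ℕ, Δt > 0, controls Θ ∈ (ℝ²)^K and every scaling factor θ0 ∈ ℝ, one has sup_{x ∈ [−1,1]} |θ0 · f(x,Θ) − x| ≥ 1. In particular the model cannot approximate the odd target function f0(x) = x to any accuracy better than 1. -/

import Mathlib

open Matrix Kronecker

/-- The Pauli matrix `σx`. -/
noncomputable def σx : Matrix (Fin 2) (Fin 2) ℂ := !![0, 1; 1, 0]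

/-- The Pauli matrix `σy`. -/
noncomputable def σy : Matrix (Fin 2) (Fin 2) ℂ := !![0, -Complex.I; Complex.I, 0]

/-- The Pauli matrix `σz`. -/
noncomputable def σz : Matrix (Fin 2) (Fin 2) ℂ := !![1, 0; 0, -1]

/-- The 2×2 identity matrix. -/
noncomputable def I₂ : Matrix (Fin 2) (Fin 2) ℂ := 1

/-- The state sequence of the two-qubit pulse-based model with initial state `|00⟩`:
`ψ_{k+1} = exp(−iΔt(x·σz⊗σz + θ₁^{(k)}·σx⊗I₂ + θ₂^{(k)}·I₂⊗σx)) ψ_k`. -/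
noncomputable def psi (K : ℕ) (Δt : ℝ) (Θ : Fin K → ℝ × ℝ) (x : ℝ) :
    ℕ → (Fin 2 × Fin 2 → ℂ)
  | 0 => fun a => if a = (0, 0) then 1 else 0
  | k + 1 =>
      if h : k < K then
        (NormedSpace.exp ((-(Δt : ℂ) * Complex.I) •
            ((x : ℂ) • (σz ⊗ₖ σz) + ((Θ ⟨k, h⟩).1 : ℂ) • (σx ⊗ₖ I₂) +
              ((Θ ⟨k, h⟩).2 : ℂ) • (I₂ ⊗ₖ σx)))).mulVec (psi K Δt Θ x k)
      else psi K Δt Θ x k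

/-- The model output `f(x,Θ) = ⟨ψ_K(x), (σz⊗σz) ψ_K(x)⟩`. -/
noncomputable def f (K : ℕ) (Δt : ℝ) (Θ : Fin K → ℝ × ℝ) (x : ℝ) : ℝ :=
  (star (psi K Δt Θ x K) ⬝ᵥ (σz ⊗ₖ σz).mulVec (psi K Δt Θ x K)).re

/-! ### Auxiliary matrices and their algebraic properties -/

noncomputable def D : Matrix (Fin 2 × Fin 2) (Fin 2 × Fin 2) ℂ := σz ⊗ₖ σz
noncomputable def X1 : Matrix (Fin 2 × Fin 2) (Fin 2 × Fin 2) ℂ := σx ⊗ₖ I₂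
noncomputable def X2 : Matrix (Fin 2 × Fin 2) (Fin 2 × Fin 2) ℂ := I₂ ⊗ₖ σx

lemma hzz : σz * σz = 1 := by
  ext i j; fin_cases i <;> fin_cases j <;>
    simp [σz, Matrix.mul_apply, Fin.sum_univ_two, Matrix.one_apply]

lemma hzx : σz * σx = -(σx * σz) := by
  ext i j; fin_cases i <;> fin_cases j <;>
    simp [σz, σx, Matrix.mul_apply, Fin.sum_univ_two]

lemma hDD : D * D = 1 := by
  rw [D, ← Matrix.mul_kronecker_mul, hzz, Matrix.one_kronecker_one]

lemma hDX1 : D * X1 = -(X1 * D) := by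
  rw [D, X1, ← Matrix.mul_kronecker_mul, ← Matrix.mul_kronecker_mul]
  simp only [I₂, hzx, mul_one, one_mul]
  ext ⟨i,j⟩ ⟨k,l⟩
  simp [Matrix.kroneckerMap_apply]

lemma hDX2 : D * X2 = -(X2 * D) := by
  rw [D, X2, ← Matrix.mul_kronecker_mul, ← Matrix.mul_kronecker_mul]
  simp only [I₂, hzx, mul_one, one_mul]
  ext ⟨i,j⟩ ⟨k,l⟩
  simp [Matrix.kroneckerMap_apply]

lemma hDH : Dᴴ = D := by
  ext a b; obtain ⟨i,j⟩ := a; obtain ⟨k,l⟩ := b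
  fin_cases i <;> fin_cases j <;> fin_cases k <;> fin_cases l <;>
    simp [D, σz, Matrix.kroneckerMap_apply]

lemma hX1H : X1ᴴ = X1 := by
  ext a b; obtain ⟨i,j⟩ := a; obtain ⟨k,l⟩ := b
  fin_cases i <;> fin_cases j <;> fin_cases k <;> fin_cases l <;>
    simp [X1, σx, I₂, Matrix.kroneckerMap_apply, Matrix.one_apply]

lemma hX2H : X2ᴴ = X2 := by
  ext a b; obtain ⟨i,j⟩ := a; obtain ⟨k,l⟩ := b
  fin_cases i <;> fin_cases j <;> fin_cases k <;> fin_cases l <;>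
    simp [X2, σx, I₂, Matrix.kroneckerMap_apply, Matrix.one_apply]

lemma hDT : Dᵀ = D := by
  ext a b; obtain ⟨i,j⟩ := a; obtain ⟨k,l⟩ := b
  fin_cases i <;> fin_cases j <;> fin_cases k <;> fin_cases l <;>
    simp [D, σz, Matrix.kroneckerMap_apply]

lemma hX1T : X1ᵀ = X1 := by
  ext a b; obtain ⟨i,j⟩ := a; obtain ⟨k,l⟩ := b
  fin_cases i <;> fin_cases j <;> fin_cases k <;> fin_cases l <;>
    simp [X1, σx, I₂, Matrix.kroneckerMap_apply, Matrix.one_apply]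

lemma hX2T : X2ᵀ = X2 := by
  ext a b; obtain ⟨i,j⟩ := a; obtain ⟨k,l⟩ := b
  fin_cases i <;> fin_cases j <;> fin_cases k <;> fin_cases l <;>
    simp [X2, σx, I₂, Matrix.kroneckerMap_apply, Matrix.one_apply]

lemma hDdiag' (a : Fin 2 × Fin 2) : D a a = 1 ∨ D a a = -1 := by
  obtain ⟨i,j⟩ := a
  fin_cases i <;> fin_cases j <;> simp [D, σz, Matrix.kroneckerMap_apply]

lemma Dmv (v : Fin 2 × Fin 2 → ℂ) (a : Fin 2 × Fin 2) : D.mulVec v a = D a a * v a := by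
  obtain ⟨i,j⟩ := a
  fin_cases i <;> fin_cases j <;>
    simp [Matrix.mulVec, dotProduct, Fintype.sum_prod_type, Fin.sum_univ_two,
      D, σz, Matrix.kroneckerMap_apply]

/-! ### The Hamiltonian-exponent matrix and its symmetries -/

noncomputable def Amat (Δt x t1 t2 : ℝ) : Matrix (Fin 2 × Fin 2) (Fin 2 × Fin 2) ℂ :=
  (-(Δt : ℂ) * Complex.I) • ((x : ℂ) • D + (t1 : ℂ) • X1 + (t2 : ℂ) • X2)

lemma A_antiH (Δt x t1 t2 : ℝ) : (Amat Δt x t1 t2)ᴴ = -Amat Δt x t1 t2 := by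
  unfold Amat
  rw [Matrix.conjTranspose_smul]
  rw [Matrix.conjTranspose_add, Matrix.conjTranspose_add, Matrix.conjTranspose_smul,
    Matrix.conjTranspose_smul, Matrix.conjTranspose_smul, hDH, hX1H, hX2H]
  simp only [Complex.star_def, _root_.map_mul, map_neg, Complex.conj_ofReal, Complex.conj_I]
  module

lemma A_symm (Δt x t1 t2 : ℝ) : (Amat Δt x t1 t2)ᵀ = Amat Δt x t1 t2 := by
  unfold Amat
  rw [Matrix.transpose_smul, Matrix.transpose_add, Matrix.transpose_add,
    Matrix.transpose_smul, Matrix.transpose_smul, Matrix.transpose_smul, hDT, hX1T, hX2T]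

lemma A_conjflip (Δt x t1 t2 : ℝ) :
    D * (-Amat Δt x t1 t2) * D = Amat Δt (-x) t1 t2 := by
  have h1 : D * D * D = D := by rw [hDD, one_mul]
  have h2 : D * X1 * D = -X1 := by
    rw [hDX1, Matrix.neg_mul, Matrix.mul_assoc, hDD, Matrix.mul_one]
  have h3 : D * X2 * D = -X2 := by
    rw [hDX2, Matrix.neg_mul, Matrix.mul_assoc, hDD, Matrix.mul_one]
  unfold Amat
  simp only [Matrix.mul_neg, Matrix.neg_mul, mul_smul_comm, smul_mul_assoc,
    Matrix.mul_add, Matrix.add_mul]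
  rw [h1, h2, h3]
  push_cast
  module

noncomputable def Du : (Matrix (Fin 2 × Fin 2) (Fin 2 × Fin 2) ℂ)ˣ := ⟨D, D, hDD, hDD⟩

lemma exp_even (Δt x t1 t2 : ℝ) :
    NormedSpace.exp (Amat Δt (-x) t1 t2)
      = D * ((NormedSpace.exp (Amat Δt x t1 t2))ᴴ)ᵀ * D := by
  rw [← Matrix.exp_conjTranspose, A_antiH, ← Matrix.exp_transpose, Matrix.transpose_neg,
    A_symm, ← A_conjflip]
  have h := Matrix.exp_units_conj Du (-Amat Δt x t1 t2)
  simpa [Du] using h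

lemma exp_unitary (Δt x t1 t2 : ℝ) :
    (NormedSpace.exp (Amat Δt x t1 t2))ᴴ * NormedSpace.exp (Amat Δt x t1 t2) = 1 := by
  rw [← Matrix.exp_conjTranspose, A_antiH,
    ← Matrix.exp_add_of_commute _ _ ((Commute.refl (Amat Δt x t1 t2)).neg_left),
    neg_add_cancel, NormedSpace.exp_zero]

/-! ### Symmetry of the state sequence -/

lemma star_mulVec' (E : Matrix (Fin 2 × Fin 2) (Fin 2 × Fin 2) ℂ) (v : Fin 2 × Fin 2 → ℂ) :
    star (E.mulVec v) = (Eᴴ)ᵀ.mulVec (star v) := by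
  rw [Matrix.star_mulVec, ← Matrix.mulVec_transpose]

lemma psi_succ (K : ℕ) (Δt : ℝ) (Θ : Fin K → ℝ × ℝ) (x : ℝ) (k : ℕ) :
    psi K Δt Θ x (k+1) = if h : k < K then
      (NormedSpace.exp (Amat Δt x (Θ ⟨k,h⟩).1 (Θ ⟨k,h⟩).2)).mulVec (psi K Δt Θ x k)
    else psi K Δt Θ x k := rfl

lemma psi_even (K : ℕ) (Δt : ℝ) (Θ : Fin K → ℝ × ℝ) (x : ℝ) (k : ℕ) :
    psi K Δt Θ (-x) k = D.mulVec (star (psi K Δt Θ x k)) := by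
  induction k with
  | zero =>
    ext a
    obtain ⟨i, j⟩ := a
    fin_cases i <;> fin_cases j <;>
      simp [psi, Matrix.mulVec, dotProduct, Fintype.sum_prod_type, Fin.sum_univ_two,
        D, σz, Matrix.kroneckerMap_apply, Prod.ext_iff]
  | succ k ih =>
    rw [psi_succ, psi_succ]
    by_cases h : k < K
    · rw [dif_pos h, dif_pos h, ih, exp_even, star_mulVec']
      rw [Matrix.mulVec_mulVec, Matrix.mulVec_mulVec,
        Matrix.mul_assoc (D * _), hDD, Matrix.mul_one]
    · rw [dif_neg h, dif_neg h, ih]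

lemma psi_norm (K : ℕ) (Δt : ℝ) (Θ : Fin K → ℝ × ℝ) (x : ℝ) (k : ℕ) :
    star (psi K Δt Θ x k) ⬝ᵥ psi K Δt Θ x k = 1 := by
  induction k with
  | zero =>
    simp [psi, dotProduct, Fintype.sum_prod_type, Fin.sum_univ_two, Prod.ext_iff]
  | succ k ih =>
    rw [psi_succ]
    by_cases h : k < K
    · rw [dif_pos h, Matrix.star_mulVec, Matrix.dotProduct_mulVec, Matrix.vecMul_vecMul,
        exp_unitary, Matrix.vecMul_one, ih]
    · rw [dif_neg h, ih]

lemma f_even (K : ℕ) (Δt : ℝ) (Θ : Fin K → ℝ × ℝ) (x : ℝ) :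
    f K Δt Θ (-x) = f K Δt Θ x := by
  unfold f
  rw [psi_even]
  set ψ := psi K Δt Θ x K with hψ
  have hfold : (σz ⊗ₖ σz : Matrix (Fin 2 × Fin 2) (Fin 2 × Fin 2) ℂ) = D := rfl
  rw [hfold, Matrix.star_mulVec, star_star, hDH, Matrix.mulVec_mulVec, hDD,
    Matrix.one_mulVec, Matrix.dotProduct_mulVec, dotProduct_comm]
  rw [← Matrix.mulVec_transpose, hDT, dotProduct_comm]
  rw [← Matrix.dotProduct_mulVec, dotProduct_comm]

lemma f_bound (K : ℕ) (Δt : ℝ) (Θ : Fin K → ℝ × ℝ) (x : ℝ) : |f K Δt Θ x| ≤ 1 := by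
  have hψ := psi_norm K Δt Θ x K
  set ψ := psi K Δt Θ x K with hψdef
  have hsum : ∑ a, Complex.normSq (ψ a) = 1 := by
    have h1 : star ψ ⬝ᵥ ψ = ((∑ a, Complex.normSq (ψ a) : ℝ) : ℂ) := by
      push_cast
      simp [dotProduct, Complex.normSq_eq_conj_mul_self, Complex.star_def]
    rw [h1] at hψ
    exact_mod_cast hψ
  have hfold : (σz ⊗ₖ σz : Matrix (Fin 2 × Fin 2) (Fin 2 × Fin 2) ℂ) = D := rfl
  unfold f
  rw [hfold, ← hψdef]
  calc |(star ψ ⬝ᵥ D *ᵥ ψ).re| ≤ ‖star ψ ⬝ᵥ D *ᵥ ψ‖ := Complex.abs_re_le_norm _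
    _ ≤ ∑ a, ‖star ψ a * (D *ᵥ ψ) a‖ := by
        rw [dotProduct]; exact norm_sum_le _ _
    _ = ∑ a, Complex.normSq (ψ a) := by
        refine Finset.sum_congr rfl fun a _ => ?_
        rw [Dmv]
        rcases hDdiag' a with h | h <;>
          simp [h, _root_.map_mul, Complex.star_def, Complex.normSq_eq_norm_sq, sq]
    _ = 1 := hsum

/-- **Loss of expressivity for the two-qubit model initialized at `|00⟩`**: for every choice
of controls and scaling factor, `sup_{x ∈ [−1,1]} |θ0·f(x,Θ) − x| ≥ 1`; the model cannot
approximate the odd target function `f0(x) = x` to accuracy better than `1`. -/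
theorem loss_of_expressivity (K : ℕ) (Δt : ℝ) (hΔt : 0 < Δt) (Θ : Fin K → ℝ × ℝ)
    (θ0 : ℝ) :
    1 ≤ sSup ((fun x => |θ0 * f K Δt Θ x - x|) '' Set.Icc (-1 : ℝ) 1) := by
  have hbdd : BddAbove ((fun x => |θ0 * f K Δt Θ x - x|) '' Set.Icc (-1 : ℝ) 1) := by
    refine ⟨|θ0| + 1, ?_⟩
    rintro y ⟨x, hx, rfl⟩
    have h1 : |θ0 * f K Δt Θ x - x| ≤ |θ0 * f K Δt Θ x| + |x| := abs_sub _ _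
    have h2 : |θ0 * f K Δt Θ x| = |θ0| * |f K Δt Θ x| := abs_mul _ _
    have h3 := f_bound K Δt Θ x
    have h4 : |x| ≤ 1 := abs_le.2 ⟨hx.1, hx.2⟩
    have h6 : (0:ℝ) ≤ |θ0| := abs_nonneg θ0
    nlinarith [abs_nonneg (f K Δt Θ x)]
  have heven : f K Δt Θ (-1) = f K Δt Θ 1 := f_even K Δt Θ 1
  have key : (1:ℝ) ≤ |θ0 * f K Δt Θ 1 - 1| ∨ (1:ℝ) ≤ |θ0 * f K Δt Θ (-1) - (-1)| := by
    rw [heven]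
    by_contra hc
    push_neg at hc
    obtain ⟨ha, hb⟩ := hc
    have h2 : |(θ0 * f K Δt Θ 1 - (-1)) - (θ0 * f K Δt Θ 1 - 1)| ≤
        |θ0 * f K Δt Θ 1 - (-1)| + |θ0 * f K Δt Θ 1 - 1| := abs_sub _ _
    have h3 : |(θ0 * f K Δt Θ 1 - (-1)) - (θ0 * f K Δt Θ 1 - 1)| = 2 := by
      norm_num
    linarith
  rcases key with h | h
  · exact le_trans h (le_csSup hbdd ⟨1, by norm_num, rfl⟩)
  · exact le_trans h (le_csSup hbdd ⟨-1, by norm_num, rfl⟩)
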